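/- arXiv:2605.00336 — 5 statements merged into one kernel-verified Lean document; each statement's English description precedes it below -/
import Mathlib

section
/- Let Φ be a real n × d matrix, let η > 0, set K = Φ Φᵀ, and define D : Finset (Fin n) → ℝ by D(S) = log det(I + η K_S), where K_S is the principal submatrix of K indexed by S (with D(∅) = 0). Then for every S ⊆ Fin n and every e ∉ S, the marginal gain satisfies D(S ∪ {e}) − D(S) = log(1 + η φ_eᵀ M_S⁻¹ φ_e), where φ_e ∈ ℝ^d is row e of Φ and M_S = I + η Φ_Sᵀ Φ_S. -/
open Matrix

/-- The submatrix of `Φ` consisting of the rows indexed by `S`. -/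
def rowSub {n d : ℕ} (Φ : Matrix (Fin n) (Fin d) ℝ) (S : Finset (Fin n)) :
    Matrix {x // x ∈ S} (Fin d) ℝ :=
  Φ.submatrix (fun i => (i : Fin n)) id

/-- `M_S = I + η Φ_Sᵀ Φ_S`. -/
noncomputable def Mmat {n d : ℕ} (Φ : Matrix (Fin n) (Fin d) ℝ) (η : ℝ)
    (S : Finset (Fin n)) : Matrix (Fin d) (Fin d) ℝ :=
  1 + η • ((rowSub Φ S)ᵀ * rowSub Φ S)

/-- The principal submatrix `K_S` of `K` indexed by `S`. -/
def prinSub {n : ℕ} (K : Matrix (Fin n) (Fin n) ℝ) (S : Finset (Fin n)) :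
    Matrix {x // x ∈ S} {x // x ∈ S} ℝ :=
  K.submatrix (fun i => (i : Fin n)) (fun j => (j : Fin n))

/-- Log-determinant diversity `D(S) = log det (I + η K_S)` (so `D(∅) = 0`). -/
noncomputable def Dlog {n : ℕ} (K : Matrix (Fin n) (Fin n) ℝ) (η : ℝ)
    (S : Finset (Fin n)) : ℝ :=
  Real.log (1 + η • prinSub K S).det


/-- Weinstein–Aronszajn: the determinant defining `Dlog` equals `det (Mmat Φ η S)`. -/
lemma det_eq_Mmat {n d : ℕ} (Φ : Matrix (Fin n) (Fin d) ℝ) (η : ℝ) (S : Finset (Fin n)) :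
    (1 + η • prinSub (Φ * Φᵀ) S).det = (Mmat Φ η S).det := by
  have h : prinSub (Φ * Φᵀ) S = rowSub Φ S * (rowSub Φ S)ᵀ := by
    ext i j
    simp [prinSub, rowSub, mul_apply]
  rw [h, ← Matrix.smul_mul, det_one_add_mul_comm, Matrix.mul_smul, Mmat]

lemma smul_tmul_posSemidef {m : Type*} [Fintype m] {d : ℕ} (X : Matrix m (Fin d) ℝ)
    {η : ℝ} (hη : 0 ≤ η) : (η • (Xᵀ * X)).PosSemidef := by
  have : η • (Xᵀ * X) = (Real.sqrt η • X)ᵀ * (Real.sqrt η • X) := by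
    rw [Matrix.transpose_smul, Matrix.smul_mul, Matrix.mul_smul, smul_smul,
      Real.mul_self_sqrt hη]
  rw [this, ← conjTranspose_eq_transpose_of_trivial]
  exact posSemidef_conjTranspose_mul_self _

set_option maxHeartbeats 1000000 in
lemma Mmat_posDef {n d : ℕ} (Φ : Matrix (Fin n) (Fin d) ℝ) {η : ℝ} (hη : 0 ≤ η)
    (S : Finset (Fin n)) : (Mmat Φ η S).PosDef := by
  rw [Mmat]
  exact Matrix.PosDef.add_posSemidef (Matrix.PosDef.one (n := Fin d) (R := ℝ))
    (smul_tmul_posSemidef _ hη)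

lemma Mmat_insert {n d : ℕ} (Φ : Matrix (Fin n) (Fin d) ℝ) (η : ℝ)
    (S : Finset (Fin n)) (e : Fin n) (he : e ∉ S) :
    Mmat Φ η (insert e S) = Mmat Φ η S + replicateCol Unit (η • Φ e) * replicateRow Unit (Φ e) := by
  ext i j
  simp only [Mmat, Matrix.add_apply, Matrix.smul_apply, mul_apply, rowSub, transpose_apply,
    submatrix_apply, id, Pi.smul_apply, smul_eq_mul, replicateCol_apply, replicateRow_apply]
  rw [Finset.sum_coe_sort (insert e S) (fun k => Φ k i * Φ k j),
    Finset.sum_coe_sort S (fun k => Φ k i * Φ k j), Finset.sum_insert he,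
    Fintype.sum_unique (fun _ : Unit => η * Φ e i * Φ e j)]
  ring

/-- Matrix determinant lemma step. -/
lemma det_Mmat_insert {n d : ℕ} (Φ : Matrix (Fin n) (Fin d) ℝ) {η : ℝ} (hη : 0 < η)
    (S : Finset (Fin n)) (e : Fin n) (he : e ∉ S) :
    (Mmat Φ η (insert e S)).det =
      (Mmat Φ η S).det * (1 + η * (Φ e ⬝ᵥ ((Mmat Φ η S)⁻¹ *ᵥ Φ e))) := by
  have hU : IsUnit (Mmat Φ η S).det := (Mmat_posDef Φ hη.le S).det_pos.ne'.isUnit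
  rw [Mmat_insert Φ η S e he, det_add_replicateCol_mul_replicateRow hU]
  congr 1
  rw [det_unique]
  simp only [Matrix.add_apply, Matrix.one_apply_eq, mul_apply, replicateRow_apply, replicateCol_apply,
    Pi.smul_apply, smul_eq_mul, dotProduct, mulVec, Finset.mul_sum]
  congr 1
  rw [Finset.sum_comm]
  apply Finset.sum_congr rfl
  intro k _
  rw [Finset.sum_mul]
  apply Finset.sum_congr rfl
  intro j _
  ring

/-- with `K = Φ Φᵀ`, the marginal gain of the log-determinant diversity is
`D(S ∪ {e}) − D(S) = log (1 + η φ_eᵀ M_S⁻¹ φ_e)`. -/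
theorem Dlog_marginal_gain {n d : ℕ} (Φ : Matrix (Fin n) (Fin d) ℝ) (η : ℝ)
    (hη : 0 < η) (S : Finset (Fin n)) (e : Fin n) (he : e ∉ S) :
    Dlog (Φ * Φᵀ) η (insert e S) - Dlog (Φ * Φᵀ) η S =
      Real.log (1 + η * (Φ e ⬝ᵥ ((Mmat Φ η S)⁻¹ *ᵥ Φ e))) := by
  have hpos : (0:ℝ) < (Mmat Φ η S).det := (Mmat_posDef Φ hη.le S).det_pos
  have hquad : 0 ≤ Φ e ⬝ᵥ ((Mmat Φ η S)⁻¹ *ᵥ Φ e) := by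
    have := ((Mmat_posDef Φ hη.le S).inv.posSemidef).dotProduct_mulVec_nonneg (Φ e)
    simpa using this
  have hc : (0:ℝ) < 1 + η * (Φ e ⬝ᵥ ((Mmat Φ η S)⁻¹ *ᵥ Φ e)) := by positivity
  rw [Dlog, Dlog, det_eq_Mmat, det_eq_Mmat, det_Mmat_insert Φ hη S e he,
    Real.log_mul hpos.ne' hc.ne']
  ring
end

section
/- Let K be a real n × n positive semidefinite matrix and let η > 0. Define D : Finset (Fin n) → ℝ by D(S) = log det(I + η K_S), where K_S is the principal submatrix of K indexed by S (with D(∅) = 0). Then D is monotone: for all S ⊆ Fin n and e ∉ S, D(S ∪ {e}) ≥ D(S), and more generally D(A) ≤ D(B) whenever A ⊆ B. -/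
open Matrix

section aux

variable {m : Type*} [Fintype m] [DecidableEq m]

lemma psd_smul {M : Matrix m m ℝ} (hM : M.PosSemidef) {c : ℝ} (hc : 0 ≤ c) :
    (c • M).PosSemidef := by
  refine ⟨?_, fun x => ?_⟩
  · unfold Matrix.IsHermitian
    rw [conjTranspose_smul, hM.1]
    simp
  · exact (hM.smul hc).2 x

lemma one_le_det_one_add {Q : Matrix m m ℝ} (hQ : Q.PosSemidef) :
    1 ≤ (1 + Q).det := by
  have hH := hQ.1
  set U := (hH.eigenvectorUnitary : Matrix m m ℝ) with hUdef
  have hU : U * star U = 1 := (Matrix.mem_unitaryGroup_iff).mp hH.eigenvectorUnitary.2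
  have key : 1 + Q = U * (1 + diagonal (RCLike.ofReal ∘ hH.eigenvalues)) * star U := by
    rw [mul_add, mul_one, add_mul, hU]
    conv_lhs => rw [hH.spectral_theorem, Unitary.conjStarAlgAut_apply]
  have hdet : (1 + Q).det
      = ((1 : Matrix m m ℝ) + diagonal (RCLike.ofReal ∘ hH.eigenvalues)).det := by
    rw [key, det_mul, det_mul, mul_comm (det U), mul_assoc, ← det_mul, hU, det_one, mul_one]
  have hdiag : (1 : Matrix m m ℝ) + diagonal (RCLike.ofReal ∘ hH.eigenvalues)
      = diagonal (fun i => 1 + hH.eigenvalues i) := by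
    rw [← diagonal_one, diagonal_add]
    rfl
  rw [hdet, hdiag, det_diagonal]
  calc (1 : ℝ) = ∏ _i : m, (1 : ℝ) := by simp
    _ ≤ ∏ i, (1 + hH.eigenvalues i) :=
        Finset.prod_le_prod (fun i _ => zero_le_one)
          (fun i _ => by linarith [hQ.eigenvalues_nonneg i])

lemma det_one_add_block_le {α β : Type*} [Fintype α] [DecidableEq α] [Fintype β] [DecidableEq β]
    {M : Matrix (α ⊕ β) (α ⊕ β) ℝ} (hM : M.PosSemidef) :
    (1 + M.toBlocks₁₁).det ≤ (1 + M).det := by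
  obtain ⟨P, B, C, D, rfl⟩ : ∃ P B C D, M = fromBlocks P B C D :=
    ⟨_, _, _, _, (fromBlocks_toBlocks M).symm⟩
  obtain ⟨hP1, rfl, -, -⟩ := isHermitian_fromBlocks_iff.mp hM.1
  have hP : P.PosSemidef := by
    have := hM.submatrix (Sum.inl : α → α ⊕ β)
    convert this using 1
    ext i j
    simp
  have hA : (1 + P).PosDef := Matrix.PosDef.one.add_posSemidef hP
  haveI := hA.isUnit.invertible
  have hblk : (fromBlocks (1 : Matrix α α ℝ) 0 0 (0 : Matrix β β ℝ)).PosSemidef := by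
    rw [← diagonal_one, ← diagonal_zero, fromBlocks_diagonal]
    exact posSemidef_diagonal_iff.mpr (by rintro (i | i) <;> simp)
  have hM' : (fromBlocks (1 + P) B Bᴴ D).PosSemidef := by
    have : fromBlocks (1 + P) B Bᴴ D
        = fromBlocks (1 : Matrix α α ℝ) 0 0 (0 : Matrix β β ℝ) + fromBlocks P B Bᴴ D := by
      rw [fromBlocks_add]; simp
    rw [this]
    exact hblk.add hM
  have hS : (D - Bᴴ * (1 + P)⁻¹ * B).PosSemidef :=
    (PosDef.fromBlocks₁₁ B D hA).mp hM'
  have hsum : 1 + fromBlocks P B Bᴴ D = fromBlocks (1 + P) B Bᴴ (1 + D) := by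
    rw [← fromBlocks_one, fromBlocks_add]; simp
  have h1 : (1 : ℝ) ≤ ((1 + D) - Bᴴ * (1 + P)⁻¹ * B).det := by
    have : (1 + D) - Bᴴ * (1 + P)⁻¹ * B = 1 + (D - Bᴴ * (1 + P)⁻¹ * B) := by
      abel
    rw [this]
    exact one_le_det_one_add hS
  have h2 : (0 : ℝ) < (1 + P).det := hA.det_pos
  rw [toBlocks_fromBlocks₁₁, hsum, det_fromBlocks₁₁, invOf_eq_nonsing_inv]
  nlinarith [h1, h2]

lemma det_one_add_submatrix_le {l : Type*} [Fintype l] [DecidableEq l]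
    {N : Matrix m m ℝ} (hN : N.PosSemidef) (f : l → m) (hf : Function.Injective f) :
    (1 + N.submatrix f f).det ≤ (1 + N).det := by
  classical
  let e : l ⊕ ↥(Set.range f)ᶜ ≃ m :=
    (Equiv.sumCongr (Equiv.ofInjective f hf) (Equiv.refl _)).trans
      (Equiv.Set.sumCompl (Set.range f))
  have hsub : (N.submatrix e e).PosSemidef := hN.submatrix e
  have h1 : (N.submatrix e e).toBlocks₁₁ = N.submatrix f f := by
    ext i j
    simp [toBlocks₁₁, e]
  calc (1 + N.submatrix f f).det = (1 + (N.submatrix e e).toBlocks₁₁).det := by rw [h1]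
    _ ≤ (1 + N.submatrix e e).det := det_one_add_block_le hsub
    _ = (1 + N).det := by
        have heq : (1 : Matrix _ _ ℝ) + N.submatrix e e = (1 + N).submatrix e e := by
          ext i j
          simp [Matrix.add_apply, Matrix.one_apply, EmbeddingLike.apply_eq_iff_eq]
        rw [heq, det_submatrix_equiv_self]

end aux

/-- for positive semidefinite `K` and `η > 0`, the log-determinant
diversity is monotone: adding an element never decreases it, and more generally
`D(A) ≤ D(B)` whenever `A ⊆ B`. -/
theorem Dlog_monotone {n : ℕ} (K : Matrix (Fin n) (Fin n) ℝ)
    (hK : K.PosSemidef) (η : ℝ) (hη : 0 < η) :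
    (∀ S : Finset (Fin n), ∀ e : Fin n, e ∉ S →
      Dlog K η S ≤ Dlog K η (insert e S)) ∧
    (∀ A B : Finset (Fin n), A ⊆ B → Dlog K η A ≤ Dlog K η B) := by
  have key : ∀ A B : Finset (Fin n), A ⊆ B → Dlog K η A ≤ Dlog K η B := by
    intro A B hAB
    have hNB : (η • prinSub K B).PosSemidef := psd_smul (hK.submatrix _) hη.le
    have hNA : (η • prinSub K A).PosSemidef := psd_smul (hK.submatrix _) hη.le
    let f : {x // x ∈ A} → {x // x ∈ B} := fun x => ⟨x.1, hAB x.2⟩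
    have hf : Function.Injective f := by
      intro a b h
      have : (f a).1 = (f b).1 := by rw [h]
      exact Subtype.ext this
    have hsub : (η • prinSub K B).submatrix f f = η • prinSub K A := by
      ext i j
      simp [prinSub, f]
    have hdet := det_one_add_submatrix_le hNB f hf
    rw [hsub] at hdet
    have hposA : (0 : ℝ) < (1 + η • prinSub K A).det :=
      (Matrix.PosDef.one.add_posSemidef hNA).det_pos
    exact Real.log_le_log hposA hdet
  exact ⟨fun S e _ => key S (insert e S) (Finset.subset_insert e S), key⟩
end

section
/- Let Φ be a real n × d matrix, let η > 0, set K = Φ Φᵀ, and define D : Finset (Fin n) → ℝ by D(S) = log det(I + η K_S), where K_S is the principal submatrix of K indexed by S (with D(∅) = 0). Then D is submodular: for all A ⊆ B ⊆ Fin n and all e ∉ B, D(A ∪ {e}) − D(A) ≥ D(B ∪ {e}) − D(B). -/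
open Matrix

/-! ### Auxiliary machinery -/

/-- The Gram-side matrix `1 + η • ∑_{i ∈ S} φ_i φ_iᵀ`. -/
noncomputable def Gmat {n d : ℕ} (Φ : Matrix (Fin n) (Fin d) ℝ) (η : ℝ)
    (S : Finset (Fin n)) : Matrix (Fin d) (Fin d) ℝ :=
  1 + η • ∑ i ∈ S, vecMulVec (Φ i) (Φ i)

lemma outer_posSemidef {d : ℕ} (v : Fin d → ℝ) : (vecMulVec v v).PosSemidef := by
  have h : (replicateRow Unit v)ᴴ = replicateCol Unit v := by
    ext i j
    simp [replicateCol_apply, replicateRow_apply, conjTranspose_apply]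
  rw [vecMulVec_eq Unit, ← h]
  exact posSemidef_conjTranspose_mul_self _

lemma sum_outer_posSemidef {n d : ℕ} (Φ : Matrix (Fin n) (Fin d) ℝ)
    (S : Finset (Fin n)) : (∑ i ∈ S, vecMulVec (Φ i) (Φ i)).PosSemidef := by
  classical
  induction S using Finset.induction with
  | empty => simpa using Matrix.PosSemidef.zero
  | @insert a s ha ih =>
      rw [Finset.sum_insert ha]
      exact (outer_posSemidef _).add ih

lemma smul_posSemidef {d : ℕ} {η : ℝ} (hη : 0 ≤ η)
    {M : Matrix (Fin d) (Fin d) ℝ} (hM : M.PosSemidef) : (η • M).PosSemidef := by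
  refine PosSemidef.of_dotProduct_mulVec_nonneg ?_ (fun x => ?_)
  · show (η • M)ᴴ = η • M
    rw [conjTranspose_smul, hM.1, star_trivial]
  · rw [smul_mulVec, dotProduct_smul]
    exact smul_nonneg hη (hM.dotProduct_mulVec_nonneg x)

lemma Gmat_posDef {n d : ℕ} (Φ : Matrix (Fin n) (Fin d) ℝ) {η : ℝ} (hη : 0 ≤ η)
    (S : Finset (Fin n)) : (Gmat Φ η S).PosDef :=
  Matrix.PosDef.add_posSemidef Matrix.PosDef.one
    (smul_posSemidef hη (sum_outer_posSemidef Φ S))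

lemma gram_eq {n d : ℕ} (Φ : Matrix (Fin n) (Fin d) ℝ) (S : Finset (Fin n)) :
    (Φ.submatrix (fun i : {x // x ∈ S} => (i : Fin n)) id)ᵀ *
      Φ.submatrix (fun i : {x // x ∈ S} => (i : Fin n)) id
      = ∑ i ∈ S, vecMulVec (Φ i) (Φ i) := by
  ext a b
  rw [← Finset.sum_coe_sort S]
  simp [Matrix.mul_apply, Matrix.sum_apply, vecMulVec_apply]

lemma dlog_eq {n d : ℕ} (Φ : Matrix (Fin n) (Fin d) ℝ) (η : ℝ)
    (S : Finset (Fin n)) :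
    Dlog (Φ * Φᵀ) η S = Real.log (Gmat Φ η S).det := by
  set Ψ := Φ.submatrix (fun i : {x // x ∈ S} => (i : Fin n)) id with hΨ
  have h1 : prinSub (Φ * Φᵀ) S = Ψ * Ψᵀ := by
    ext i j
    simp [prinSub, Matrix.mul_apply, hΨ]
  have h2 : (1 + η • prinSub (Φ * Φᵀ) S).det = (Gmat Φ η S).det := by
    rw [h1, ← Matrix.smul_mul, det_one_add_mul_comm, Matrix.mul_smul, gram_eq]
    rfl
  rw [Dlog, h2]

lemma dot_symm {d : ℕ} {M : Matrix (Fin d) (Fin d) ℝ} (hM : M.IsHermitian)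
    (u v : Fin d → ℝ) : u ⬝ᵥ M *ᵥ v = (M *ᵥ u) ⬝ᵥ v := by
  have hMt : Mᵀ = M := by
    ext i j
    simpa using hM.apply i j
  rw [dotProduct_mulVec, ← mulVec_transpose, hMt]

lemma det_Gmat_insert {n d : ℕ} (Φ : Matrix (Fin n) (Fin d) ℝ) {η : ℝ}
    (hη : 0 < η) (S : Finset (Fin n)) (e : Fin n) (he : e ∉ S) :
    (Gmat Φ η (insert e S)).det
      = (Gmat Φ η S).det * (1 + η * (Φ e ⬝ᵥ (Gmat Φ η S)⁻¹ *ᵥ Φ e)) := by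
  have hG := Gmat_posDef Φ hη.le S
  have hsum : Gmat Φ η (insert e S)
      = Gmat Φ η S + replicateCol Unit (η • Φ e) * replicateRow Unit (Φ e) := by
    rw [Gmat, Finset.sum_insert he, smul_add, replicateCol_smul, Matrix.smul_mul,
      ← vecMulVec_eq, Gmat]
    abel
  rw [hsum, det_add_replicateCol_mul_replicateRow hG.det_pos.ne'.isUnit]
  congr 1
  rw [det_unique]
  have : (replicateRow Unit (Φ e) * (Gmat Φ η S)⁻¹ * replicateCol Unit (η • Φ e)) default default
      = η * (Φ e ⬝ᵥ (Gmat Φ η S)⁻¹ *ᵥ Φ e) := by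
    rw [Matrix.mul_assoc, ← replicateCol_mulVec, replicateRow_mul_replicateCol_apply,
      mulVec_smul, dotProduct_smul, smul_eq_mul]
  simp only [Pi.add_apply, Matrix.add_apply, Matrix.one_apply_eq, this]

lemma quad_nonneg {d : ℕ} {M : Matrix (Fin d) (Fin d) ℝ} (hM : M.PosSemidef)
    (x : Fin d → ℝ) : 0 ≤ x ⬝ᵥ M *ᵥ x := by
  simpa using hM.dotProduct_mulVec_nonneg x

/-- Monotonicity of the inverse quadratic form: if `M ≤ N` (Loewner) with both
positive definite, then `xᵀ N⁻¹ x ≤ xᵀ M⁻¹ x`. -/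
lemma inv_quad_anti {d : ℕ} {M N : Matrix (Fin d) (Fin d) ℝ} (hM : M.PosDef)
    (hN : N.PosDef) (h : (N - M).PosSemidef) (x : Fin d → ℝ) :
    x ⬝ᵥ N⁻¹ *ᵥ x ≤ x ⬝ᵥ M⁻¹ *ᵥ x := by
  set y := N⁻¹ *ᵥ x with hy
  set z := M⁻¹ *ᵥ x with hz
  have hMz : M *ᵥ z = x := by
    rw [hz, mulVec_mulVec, Matrix.mul_nonsing_inv _ hM.det_pos.ne'.isUnit, one_mulVec]
  have hNy : N *ᵥ y = x := by
    rw [hy, mulVec_mulVec, Matrix.mul_nonsing_inv _ hN.det_pos.ne'.isUnit, one_mulVec]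
  have h1 : 0 ≤ (z - y) ⬝ᵥ M *ᵥ (z - y) := quad_nonneg hM.posSemidef _
  have h2 : 0 ≤ y ⬝ᵥ (N - M) *ᵥ y := quad_nonneg h _
  have e1 : z ⬝ᵥ M *ᵥ z = x ⬝ᵥ z := by
    rw [dot_symm hM.isHermitian, hMz]
  have e2 : z ⬝ᵥ M *ᵥ y = x ⬝ᵥ y := by
    rw [dot_symm hM.isHermitian, hMz]
  have e3 : y ⬝ᵥ M *ᵥ z = y ⬝ᵥ x := by rw [hMz]
  have e4 : y ⬝ᵥ N *ᵥ y = y ⬝ᵥ x := by rw [hNy]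
  have hcomm : y ⬝ᵥ x = x ⬝ᵥ y := dotProduct_comm y x
  have hexp1 : (z - y) ⬝ᵥ M *ᵥ (z - y)
      = z ⬝ᵥ M *ᵥ z - z ⬝ᵥ M *ᵥ y - y ⬝ᵥ M *ᵥ z + y ⬝ᵥ M *ᵥ y := by
    rw [mulVec_sub, sub_dotProduct, dotProduct_sub, dotProduct_sub]
    ring
  have hexp2 : y ⬝ᵥ (N - M) *ᵥ y = y ⬝ᵥ N *ᵥ y - y ⬝ᵥ M *ᵥ y := by
    rw [sub_mulVec, dotProduct_sub]
  rw [hexp1, e1, e2, e3, hcomm] at h1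
  rw [hexp2, e4, hcomm] at h2
  linarith

lemma dlog_insert {n d : ℕ} (Φ : Matrix (Fin n) (Fin d) ℝ) {η : ℝ}
    (hη : 0 < η) (S : Finset (Fin n)) (e : Fin n) (he : e ∉ S) :
    Dlog (Φ * Φᵀ) η (insert e S) - Dlog (Φ * Φᵀ) η S
      = Real.log (1 + η * (Φ e ⬝ᵥ (Gmat Φ η S)⁻¹ *ᵥ Φ e)) := by
  have hG := Gmat_posDef Φ hη.le S
  have hq : 0 ≤ Φ e ⬝ᵥ (Gmat Φ η S)⁻¹ *ᵥ Φ e :=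
    quad_nonneg hG.inv.posSemidef _
  have hpos : (0:ℝ) < 1 + η * (Φ e ⬝ᵥ (Gmat Φ η S)⁻¹ *ᵥ Φ e) := by
    nlinarith
  rw [dlog_eq, dlog_eq, det_Gmat_insert Φ hη S e he,
    Real.log_mul hG.det_pos.ne' hpos.ne']
  ring

/-- with `K = Φ Φᵀ` and `η > 0`, the log-determinant diversity is
submodular. -/
theorem Dlog_submodular {n d : ℕ} (Φ : Matrix (Fin n) (Fin d) ℝ) (η : ℝ)
    (hη : 0 < η) :
    ∀ A B : Finset (Fin n), A ⊆ B → ∀ e : Fin n, e ∉ B →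
      Dlog (Φ * Φᵀ) η (insert e A) - Dlog (Φ * Φᵀ) η A ≥
        Dlog (Φ * Φᵀ) η (insert e B) - Dlog (Φ * Φᵀ) η B := by
  intro A B hAB e heB
  have heA : e ∉ A := fun h => heB (hAB h)
  rw [dlog_insert Φ hη A e heA, dlog_insert Φ hη B e heB]
  have hGA := Gmat_posDef Φ hη.le A
  have hGB := Gmat_posDef Φ hη.le B
  have hdiff : (Gmat Φ η B - Gmat Φ η A).PosSemidef := by
    have : Gmat Φ η B - Gmat Φ η A
        = η • ∑ i ∈ B \ A, vecMulVec (Φ i) (Φ i) := by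
      rw [Gmat, Gmat, ← Finset.sum_sdiff hAB, smul_add]
      abel
    rw [this]
    exact smul_posSemidef hη.le (sum_outer_posSemidef Φ _)
  have hq : Φ e ⬝ᵥ (Gmat Φ η B)⁻¹ *ᵥ Φ e ≤ Φ e ⬝ᵥ (Gmat Φ η A)⁻¹ *ᵥ Φ e :=
    inv_quad_anti hGA hGB hdiff (Φ e)
  have hqB : 0 ≤ Φ e ⬝ᵥ (Gmat Φ η B)⁻¹ *ᵥ Φ e :=
    quad_nonneg hGB.inv.posSemidef _
  apply Real.log_le_log
  · nlinarith
  · nlinarith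
end

section
/- Let K be a real n × n positive semidefinite matrix and let η > 0. Define D : Finset (Fin n) → ℝ by D(S) = log det(I + η K_S), where K_S is the principal submatrix of K indexed by S (with D(∅) = 0). Then D is monotone and submodular. -/
open Matrix Finset

namespace DlogAux

variable {n : ℕ}

/-- column of B -/
def colv (B : Matrix (Fin n) (Fin n) ℝ) (i : Fin n) : Fin n → ℝ := fun a => B a i

lemma psd_vecMulVec (v : Fin n → ℝ) : (vecMulVec v v).PosSemidef := by
  rw [vecMulVec_eq Unit]
  have h := posSemidef_conjTranspose_mul_self (replicateRow Unit v)
  simpa [conjTranspose_replicateRow] using h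

lemma psd_smul {M : Matrix (Fin n) (Fin n) ℝ} (hM : M.PosSemidef) {c : ℝ} (hc : 0 ≤ c) :
    (c • M).PosSemidef := by
  refine ⟨?_, fun x => ?_⟩
  · show _ = _
    rw [conjTranspose_smul]
    simp [show Mᵀ = M by simpa using hM.1.eq]
  · exact (hM.smul hc).2 x

/-- sum over a Finset of psd vecMulVec's -/
lemma psd_sum (B : Matrix (Fin n) (Fin n) ℝ) (S : Finset (Fin n)) :
    (∑ i ∈ S, vecMulVec (colv B i) (colv B i)).PosSemidef := by
  refine Finset.sum_induction _ _ (fun a b ha hb => ha.add hb) .zero ?_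
  exact fun i _ => psd_vecMulVec _

noncomputable def Nmat (B : Matrix (Fin n) (Fin n) ℝ) (η : ℝ) (S : Finset (Fin n)) :
    Matrix (Fin n) (Fin n) ℝ :=
  1 + η • ∑ i ∈ S, vecMulVec (colv B i) (colv B i)

lemma Nmat_posDef (B : Matrix (Fin n) (Fin n) ℝ) {η : ℝ} (hη : 0 ≤ η) (S : Finset (Fin n)) :
    (Nmat B η S).PosDef :=
  Matrix.PosDef.add_posSemidef Matrix.PosDef.one (psd_smul (psd_sum B S) hη)

lemma pd_isUnit_det {M : Matrix (Fin n) (Fin n) ℝ} (hM : M.PosDef) : IsUnit M.det :=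
  isUnit_iff_ne_zero.mpr hM.det_pos.ne'

lemma smul_vecMulVec' (c : ℝ) (v w : Fin n → ℝ) :
    c • vecMulVec v w = vecMulVec (c • v) w := by
  ext a b
  simp [vecMulVec]
  ring

lemma sym_dot {M : Matrix (Fin n) (Fin n) ℝ} (hM : M.IsHermitian) (a b : Fin n → ℝ) :
    a ⬝ᵥ (M *ᵥ b) = b ⬝ᵥ (M *ᵥ a) := by
  have ht : Mᵀ = M := by simpa using hM.eq
  rw [Matrix.dotProduct_mulVec, ← Matrix.mulVec_transpose, ht, dotProduct_comm]

lemma psd_quad {M : Matrix (Fin n) (Fin n) ℝ} (hM : M.PosSemidef) (x : Fin n → ℝ) :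
    0 ≤ x ⬝ᵥ (M *ᵥ x) := by simpa using hM.dotProduct_mulVec_nonneg x

/-- inverse is antitone in the Loewner order, pointwise quadratic form version. -/
lemma quad_inv_antitone {M N : Matrix (Fin n) (Fin n) ℝ} (hM : M.PosDef) (hN : N.PosDef)
    (hMN : (N - M).PosSemidef) (x : Fin n → ℝ) :
    x ⬝ᵥ (N⁻¹ *ᵥ x) ≤ x ⬝ᵥ (M⁻¹ *ᵥ x) := by
  set y := N⁻¹ *ᵥ x with hy
  set z := M⁻¹ *ᵥ x with hz
  have hMz : M *ᵥ z = x := by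
    rw [hz, Matrix.mulVec_mulVec, Matrix.mul_nonsing_inv _ (pd_isUnit_det hM), Matrix.one_mulVec]
  have hNy : N *ᵥ y = x := by
    rw [hy, Matrix.mulVec_mulVec, Matrix.mul_nonsing_inv _ (pd_isUnit_det hN), Matrix.one_mulVec]
  have h1 : z ⬝ᵥ (M *ᵥ y) = y ⬝ᵥ x := by rw [sym_dot hM.isHermitian, hMz]
  have h2 : z ⬝ᵥ (M *ᵥ z) = x ⬝ᵥ z := by rw [hMz, dotProduct_comm]
  have h3 : y ⬝ᵥ (M *ᵥ z) = y ⬝ᵥ x := by rw [hMz]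
  have h4 : y ⬝ᵥ (N *ᵥ y) = y ⬝ᵥ x := by rw [hNy]
  have e1 : (y - z) ⬝ᵥ (M *ᵥ (y - z)) =
      y ⬝ᵥ (M *ᵥ y) - 2 * (y ⬝ᵥ x) + x ⬝ᵥ z := by
    rw [Matrix.mulVec_sub, sub_dotProduct, dotProduct_sub, dotProduct_sub, h1, h2, h3]
    ring
  have p1 : 0 ≤ (y - z) ⬝ᵥ (M *ᵥ (y - z)) := psd_quad hM.posSemidef _
  have p2 : 0 ≤ y ⬝ᵥ (N *ᵥ y) - y ⬝ᵥ (M *ᵥ y) := by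
    have := psd_quad hMN y
    rwa [Matrix.sub_mulVec, dotProduct_sub] at this
  have e2 : x ⬝ᵥ y = y ⬝ᵥ x := dotProduct_comm _ _
  rw [← hy, ← hz] at *
  linarith [e1, p1, p2, h4, e2]

lemma quad_inv_nonneg {M : Matrix (Fin n) (Fin n) ℝ} (hM : M.PosDef) (x : Fin n → ℝ) :
    0 ≤ x ⬝ᵥ (M⁻¹ *ᵥ x) := psd_quad hM.inv.posSemidef x

/-- matrix determinant lemma specialised to our setting -/
lemma det_insert (B : Matrix (Fin n) (Fin n) ℝ) {η : ℝ} (hη : 0 ≤ η)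
    {S : Finset (Fin n)} {e : Fin n} (he : e ∉ S) :
    (Nmat B η (insert e S)).det =
      (Nmat B η S).det *
        (1 + η * (colv B e ⬝ᵥ ((Nmat B η S)⁻¹ *ᵥ colv B e))) := by
  have hPD := Nmat_posDef B hη S
  have hsum : Nmat B η (insert e S) =
      Nmat B η S + replicateCol Unit (η • colv B e) * replicateRow Unit (colv B e) := by
    rw [Nmat, Nmat, Finset.sum_insert he, smul_add, ← vecMulVec_eq Unit, smul_vecMulVec']
    abel
  rw [hsum, det_add_replicateCol_mul_replicateRow (pd_isUnit_det hPD)]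
  congr 1
  rw [det_unique, Matrix.mul_assoc, ← replicateCol_mulVec, Matrix.add_apply, Matrix.one_apply_eq,
    replicateRow_mul_replicateCol_apply, Matrix.mulVec_smul, dotProduct_smul]
  simp

lemma Dlog_eq {K B : Matrix (Fin n) (Fin n) ℝ} (hB : K = Bᴴ * B) (η : ℝ)
    (S : Finset (Fin n)) :
    Dlog K η S = Real.log (Nmat B η S).det := by
  unfold Dlog Nmat
  congr 1
  set C : Matrix (Fin n) {x // x ∈ S} ℝ := B.submatrix id (fun i => (i : Fin n)) with hC
  have h1 : (1 : Matrix {x // x ∈ S} {x // x ∈ S} ℝ) + η • prinSub K S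
      = 1 + (η • Cᴴ) * C := by
    congr 1
    ext i j
    simp [prinSub, hB, hC, Matrix.mul_apply, Matrix.smul_apply, Finset.mul_sum, mul_assoc]
  rw [h1, det_one_add_mul_comm, Matrix.mul_smul]
  congr 2
  ext a c
  simp only [Matrix.smul_apply, Matrix.mul_apply, Matrix.sum_apply, smul_eq_mul,
    Matrix.vecMulVec_apply, colv, Matrix.conjTranspose_apply, hC, Matrix.submatrix_apply,
    id, star_trivial]
  rw [Finset.sum_coe_sort S (fun i => B a i * B c i)]

lemma Dlog_insert {K B : Matrix (Fin n) (Fin n) ℝ} (hB : K = Bᴴ * B) {η : ℝ}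
    (hη : 0 < η) {S : Finset (Fin n)} {e : Fin n} (he : e ∉ S) :
    Dlog K η (insert e S) = Dlog K η S +
      Real.log (1 + η * (colv B e ⬝ᵥ ((Nmat B η S)⁻¹ *ᵥ colv B e))) := by
  have hPD := Nmat_posDef B hη.le S
  have hqe : 0 ≤ colv B e ⬝ᵥ ((Nmat B η S)⁻¹ *ᵥ colv B e) := quad_inv_nonneg hPD _
  have hpos : (0:ℝ) < 1 + η * (colv B e ⬝ᵥ ((Nmat B η S)⁻¹ *ᵥ colv B e)) := by
    nlinarith [mul_nonneg hη.le hqe]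
  rw [Dlog_eq hB, Dlog_eq hB, det_insert B hη.le he,
    Real.log_mul hPD.det_pos.ne' hpos.ne']

lemma Nmat_sub_psd (B : Matrix (Fin n) (Fin n) ℝ) {η : ℝ} (hη : 0 ≤ η)
    {A S : Finset (Fin n)} (hAS : A ⊆ S) :
    (Nmat B η S - Nmat B η A).PosSemidef := by
  have h : Nmat B η S - Nmat B η A
      = η • ∑ i ∈ S \ A, vecMulVec (colv B i) (colv B i) := by
    rw [Nmat, Nmat, ← Finset.sum_sdiff hAS, smul_add]
    abel
  rw [h]
  exact psd_smul (psd_sum B _) hη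

open scoped MatrixOrder in
lemma exists_eq_conjTranspose_mul_self {K : Matrix (Fin n) (Fin n) ℝ} (hK : K.PosSemidef) :
    ∃ B : Matrix (Fin n) (Fin n) ℝ, K = Bᴴ * B :=
  CStarAlgebra.nonneg_iff_eq_star_mul_self.mp hK.nonneg

end DlogAux

open DlogAux in
/-- for positive semidefinite `K` and `η > 0`, the log-determinant
diversity is monotone and submodular. -/
theorem Dlog_monotone_submodular {n : ℕ} (K : Matrix (Fin n) (Fin n) ℝ)
    (hK : K.PosSemidef) (η : ℝ) (hη : 0 < η) :
    (∀ A B : Finset (Fin n), A ⊆ B → Dlog K η A ≤ Dlog K η B) ∧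
    (∀ A B : Finset (Fin n), A ⊆ B → ∀ e : Fin n, e ∉ B →
      Dlog K η (insert e A) - Dlog K η A ≥
        Dlog K η (insert e B) - Dlog K η B) := by
  obtain ⟨B₀, hB₀⟩ := exists_eq_conjTranspose_mul_self hK
  have step : ∀ (S : Finset (Fin n)) (e : Fin n), Dlog K η S ≤ Dlog K η (insert e S) := by
    intro S e
    by_cases he : e ∈ S
    · rw [Finset.insert_eq_self.mpr he]
    · rw [Dlog_insert hB₀ hη he]
      have hqe : 0 ≤ colv B₀ e ⬝ᵥ ((Nmat B₀ η S)⁻¹ *ᵥ colv B₀ e) :=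
        quad_inv_nonneg (Nmat_posDef B₀ hη.le S) _
      have : 0 ≤ Real.log (1 + η * (colv B₀ e ⬝ᵥ ((Nmat B₀ η S)⁻¹ *ᵥ colv B₀ e))) := by
        apply Real.log_nonneg
        nlinarith [mul_nonneg hη.le hqe]
      linarith
  constructor
  · have key : ∀ (T A : Finset (Fin n)), Dlog K η A ≤ Dlog K η (A ∪ T) := by
      intro T
      induction T using Finset.induction_on with
      | empty => simp
      | insert a T' hx ih =>
        intro A
        calc Dlog K η A ≤ Dlog K η (A ∪ T') := ih A
        _ ≤ Dlog K η (insert a (A ∪ T')) := step _ _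
        _ = Dlog K η (A ∪ insert a T') := by rw [Finset.union_insert]
    intro A B hAB
    have := key (B \ A) A
    rwa [Finset.union_sdiff_of_subset hAB] at this
  · intro A B hAB e heB
    have heA : e ∉ A := fun h => heB (hAB h)
    rw [Dlog_insert hB₀ hη heA, Dlog_insert hB₀ hη heB]
    have hPA := Nmat_posDef B₀ hη.le A
    have hPB := Nmat_posDef B₀ hη.le B
    have hq : colv B₀ e ⬝ᵥ ((Nmat B₀ η B)⁻¹ *ᵥ colv B₀ e)
        ≤ colv B₀ e ⬝ᵥ ((Nmat B₀ η A)⁻¹ *ᵥ colv B₀ e) :=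
      quad_inv_antitone hPA hPB (Nmat_sub_psd B₀ hη.le hAB) _
    have hqB : 0 ≤ colv B₀ e ⬝ᵥ ((Nmat B₀ η B)⁻¹ *ᵥ colv B₀ e) :=
      quad_inv_nonneg hPB _
    have hlog : Real.log (1 + η * (colv B₀ e ⬝ᵥ ((Nmat B₀ η B)⁻¹ *ᵥ colv B₀ e)))
        ≤ Real.log (1 + η * (colv B₀ e ⬝ᵥ ((Nmat B₀ η A)⁻¹ *ᵥ colv B₀ e))) := by
      apply Real.log_le_log (by nlinarith [mul_nonneg hη.le hqB])
      nlinarith [mul_le_mul_of_nonneg_left hq hη.le]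
    linarith
end

section
/- Let n be a positive integer, let r : Fin n → ℝ satisfy r_i ≥ 0 for all i, let k : Fin n × Fin n → ℝ satisfy k(i,j) ≥ 0 for all i, j, let K be a real n × n positive semidefinite matrix, and let η > 0 and α, β, γ ≥ 0. Define R(S) = Σ_{i ∈ S} r_i, C(S) = Σ_{i=1}^{n} max_{j ∈ S} k(i,j) (max over the empty set being 0), and D(S) = log det(I + η K_S), where K_S is the principal submatrix of K indexed by S (with D(∅) = 0). Then the RCD objective F(S) = α R(S) + β C(S) + γ D(S) is monotone and submodular. -/
open Matrix Finset

/-- `covMax k i S = max_{j ∈ S} k (i, j)`, with the convention that the max over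
the empty set is `0`. -/
noncomputable def covMax {n : ℕ} (k : Fin n × Fin n → ℝ) (i : Fin n)
    (S : Finset (Fin n)) : ℝ :=
  if h : S.Nonempty then S.sup' h (fun j => k (i, j)) else 0

/-- Facility-location coverage `C(S) = Σ_i max_{j ∈ S} k (i, j)`. -/
noncomputable def facilityCoverage {n : ℕ} (k : Fin n × Fin n → ℝ)
    (S : Finset (Fin n)) : ℝ :=
  ∑ i : Fin n, covMax k i S

/-- The RCD objective `F(S) = α R(S) + β C(S) + γ D(S)` with relevance
`R(S) = Σ_{i ∈ S} r i`. -/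
noncomputable def RCD {n : ℕ} (r : Fin n → ℝ) (k : Fin n × Fin n → ℝ)
    (K : Matrix (Fin n) (Fin n) ℝ) (η α β γ : ℝ) (S : Finset (Fin n)) : ℝ :=
  α * (∑ i ∈ S, r i) + β * facilityCoverage k S + γ * Dlog K η S

set_option linter.unusedSectionVars false
set_option maxHeartbeats 1000000


section Schur

variable {ι κ : Type*} [Fintype ι] [DecidableEq ι] [Fintype κ] [DecidableEq κ]

lemma matPosDef_one_add {P : Matrix ι ι ℝ} (hP : P.PosSemidef) : (1 + P).PosDef := by
  have h1 : (1 : Matrix ι ι ℝ).PosDef := by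
    simpa using Matrix.PosDef.diagonal (fun _ : ι => (one_pos : (0:ℝ) < 1))
  exact h1.add_posSemidef hP

noncomputable def schurW (M : Matrix (ι ⊕ κ) (ι ⊕ κ) ℝ) : Matrix κ κ ℝ :=
  M.toBlocks₂₂ - M.toBlocks₂₁ * (1 + M.toBlocks₁₁)⁻¹ * M.toBlocks₁₂

lemma toBlocks₁₁_psd {M : Matrix (ι ⊕ κ) (ι ⊕ κ) ℝ} (hM : M.PosSemidef) :
    (M.toBlocks₁₁).PosSemidef := hM.submatrix Sum.inl

lemma toBlocks₂₁_eq {M : Matrix (ι ⊕ κ) (ι ⊕ κ) ℝ} (hM : M.IsHermitian) :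
    M.toBlocks₂₁ = (M.toBlocks₁₂)ᴴ := by
  ext i j
  have := congrFun (congrFun hM.eq (Sum.inr i)) (Sum.inl j)
  simpa [Matrix.conjTranspose_apply, Matrix.toBlocks₂₁, Matrix.toBlocks₁₂] using this.symm

lemma one_add_decomp (M : Matrix (ι ⊕ κ) (ι ⊕ κ) ℝ) :
    1 + M = Matrix.fromBlocks (1 + M.toBlocks₁₁) M.toBlocks₁₂ M.toBlocks₂₁ (1 + M.toBlocks₂₂) := by
  conv_lhs => rw [← Matrix.fromBlocks_toBlocks M, ← Matrix.fromBlocks_one]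
  rw [Matrix.fromBlocks_add]
  simp

lemma schurW_psd {M : Matrix (ι ⊕ κ) (ι ⊕ κ) ℝ} (hM : M.PosSemidef) :
    (schurW M).PosSemidef := by
  have hA : (1 + M.toBlocks₁₁).PosDef := matPosDef_one_add (toBlocks₁₁_psd hM)
  haveI : Invertible (1 + M.toBlocks₁₁) :=
    (1 + M.toBlocks₁₁).invertibleOfIsUnitDet hA.det_pos.ne'.isUnit
  have hblk : (Matrix.fromBlocks (1 + M.toBlocks₁₁) M.toBlocks₁₂ (M.toBlocks₁₂)ᴴ
      M.toBlocks₂₂).PosSemidef := by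
    have h0 : (Matrix.fromBlocks (1 : Matrix ι ι ℝ) 0 0 (0 : Matrix κ κ ℝ)).PosSemidef := by
      rw [show (1 : Matrix ι ι ℝ) = Matrix.diagonal 1 from (Matrix.diagonal_one).symm,
        show (0 : Matrix κ κ ℝ) = Matrix.diagonal 0 from (Matrix.diagonal_zero).symm,
        Matrix.fromBlocks_diagonal]
      exact Matrix.posSemidef_diagonal_iff.mpr (by rintro (i | j) <;> simp)
    have : M + Matrix.fromBlocks 1 0 0 0 =
        Matrix.fromBlocks (1 + M.toBlocks₁₁) M.toBlocks₁₂ (M.toBlocks₁₂)ᴴ M.toBlocks₂₂ := by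
      conv_lhs => rw [← Matrix.fromBlocks_toBlocks M]
      rw [Matrix.fromBlocks_add, ← toBlocks₂₁_eq hM.1]
      simp [add_comm]
    rw [← this]
    exact hM.add h0
  have := (Matrix.PosDef.fromBlocks₁₁ M.toBlocks₁₂ M.toBlocks₂₂ hA).mp hblk
  rwa [schurW, toBlocks₂₁_eq hM.1]

lemma schurW_herm {M : Matrix (ι ⊕ κ) (ι ⊕ κ) ℝ} (hM : M.IsHermitian) :
    (schurW M).IsHermitian := by
  have hA : (1 + M.toBlocks₁₁).IsHermitian :=
    (Matrix.isHermitian_one).add (hM.submatrix Sum.inl)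
  have hAinv : ((1 + M.toBlocks₁₁)⁻¹).IsHermitian := hA.inv
  have hD : (M.toBlocks₂₂).IsHermitian := hM.submatrix Sum.inr
  rw [schurW, toBlocks₂₁_eq hM]
  exact hD.sub (Matrix.isHermitian_conjTranspose_mul_mul _ hAinv)

lemma det_one_add_schur {M : Matrix (ι ⊕ κ) (ι ⊕ κ) ℝ} (hM : M.PosSemidef) :
    (1 + M).det = (1 + M.toBlocks₁₁).det * (1 + schurW M).det := by
  have hA : (1 + M.toBlocks₁₁).PosDef := matPosDef_one_add (toBlocks₁₁_psd hM)
  haveI : Invertible (1 + M.toBlocks₁₁) :=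
    (1 + M.toBlocks₁₁).invertibleOfIsUnitDet hA.det_pos.ne'.isUnit
  rw [one_add_decomp M, Matrix.det_fromBlocks₁₁, invOf_eq_nonsing_inv, schurW, add_sub_assoc]

lemma schurW_submatrix (M : Matrix (ι ⊕ κ) (ι ⊕ κ) ℝ) {κ' : Type*} [Fintype κ'] [DecidableEq κ']
    (g : κ' → κ) :
    schurW (M.submatrix (Sum.map id g) (Sum.map id g)) = (schurW M).submatrix g g := by
  have h11 : (M.submatrix (Sum.map id g) (Sum.map id g)).toBlocks₁₁ = M.toBlocks₁₁ := by
    ext i j; rfl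
  ext i j
  simp only [schurW, h11, Matrix.sub_apply, Matrix.submatrix_apply, Matrix.mul_apply,
    Matrix.toBlocks₂₂, Matrix.toBlocks₂₁, Matrix.toBlocks₁₂, Matrix.of_apply, Sum.map_inr,
    Sum.map_inl, id_eq]

end Schur

section DLayer

variable {n : ℕ}


lemma prinSub_psd {N : Matrix (Fin n) (Fin n) ℝ} (hN : N.PosSemidef) (S : Finset (Fin n)) :
    (prinSub N S).PosSemidef := hN.submatrix _

lemma det_one_add_prinSub_pos {N : Matrix (Fin n) (Fin n) ℝ} (hN : N.PosSemidef)
    (S : Finset (Fin n)) : 0 < (1 + prinSub N S).det :=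
  (matPosDef_one_add (prinSub_psd hN S)).det_pos

lemma det_one_add_prinSub_eq {σ : Type*} [Fintype σ] [DecidableEq σ]
    (N : Matrix (Fin n) (Fin n) ℝ) (T : Finset (Fin n)) (u : σ → Fin n)
    (hu : Function.Injective u) (him : ∀ z, u z ∈ T) (hcard : Fintype.card σ = T.card) :
    (1 + prinSub N T).det = (1 + N.submatrix u u).det := by
  have hbij : Function.Bijective (fun z => (⟨u z, him z⟩ : {x // x ∈ T})) := by
    rw [Fintype.bijective_iff_injective_and_card]
    constructor
    · intro a b hab
      exact hu (congrArg Subtype.val hab)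
    · rw [hcard, Fintype.card_coe]
  let e := Equiv.ofBijective _ hbij
  have := Matrix.det_submatrix_equiv_self e (1 + prinSub N T)
  rw [← this]
  congr 1
  ext i j
  simp [e, Matrix.submatrix_apply, Matrix.add_apply, prinSub, Matrix.one_apply,
    Equiv.ofBijective_apply, Subtype.ext_iff, hu.eq_iff]

end DLayer

section DSteps

variable {n : ℕ}

lemma psd_diag_nonneg {ι : Type*} [Fintype ι] [DecidableEq ι] {P : Matrix ι ι ℝ} (hP : P.PosSemidef) (i : ι) :
    0 ≤ P i i := by
  have := hP.dotProduct_mulVec_nonneg (Pi.single i 1)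
  simpa [dotProduct, Matrix.mulVec, Pi.single_apply] using this

lemma Dmono_step {N : Matrix (Fin n) (Fin n) ℝ} (hN : N.PosSemidef) (A : Finset (Fin n))
    (e : Fin n) (he : e ∉ A) :
    (1 + prinSub N A).det ≤ (1 + prinSub N (insert e A)).det := by
  classical
  set u : ({x // x ∈ A} ⊕ Unit) → Fin n := Sum.elim Subtype.val (fun _ => e) with hu_def
  have hu : Function.Injective u := by
    rintro (a | ⟨⟩) (b | ⟨⟩) h
    · exact congrArg Sum.inl (Subtype.ext h)
    · simp only [hu_def, Sum.elim_inl, Sum.elim_inr] at h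
      exact absurd (h ▸ a.2) he
    · simp only [hu_def, Sum.elim_inl, Sum.elim_inr] at h
      exact absurd (h ▸ b.2) (by simpa using he)
    · rfl
  have him : ∀ z, u z ∈ insert e A := by
    rintro (a | ⟨⟩)
    · exact Finset.mem_insert_of_mem a.2
    · exact Finset.mem_insert_self _ _
  have hcard : Fintype.card ({x // x ∈ A} ⊕ Unit) = (insert e A).card := by
    simp [Fintype.card_sum, Fintype.card_coe, Finset.card_insert_of_notMem he]
  set M := N.submatrix u u with hM_def
  have hM : M.PosSemidef := hN.submatrix u
  have h11 : M.toBlocks₁₁ = prinSub N A := by ext i j; rfl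
  rw [det_one_add_prinSub_eq N (insert e A) u hu him hcard]
  have hfact : (1 + M).det = (1 + prinSub N A).det * (1 + schurW M).det := by
    rw [det_one_add_schur hM, h11]
  rw [hfact]
  have hw : 0 ≤ schurW M default default := psd_diag_nonneg (schurW_psd hM) _
  have hdet1 : (1 : ℝ) ≤ (1 + schurW M).det := by
    rw [Matrix.det_unique]
    simp only [Matrix.add_apply, Matrix.one_apply_eq]
    linarith
  exact le_mul_of_one_le_right (det_one_add_prinSub_pos hN A).le hdet1

end DSteps

section DSub

variable {n : ℕ}

lemma Dsub_step {N : Matrix (Fin n) (Fin n) ℝ} (hN : N.PosSemidef) (S : Finset (Fin n))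
    (e f : Fin n) (he : e ∉ S) (hf : f ∉ S) (hef : e ≠ f) :
    (1 + prinSub N (insert e (insert f S))).det * (1 + prinSub N S).det ≤
      (1 + prinSub N (insert e S)).det * (1 + prinSub N (insert f S)).det := by
  classical
  set u : {x // x ∈ S} ⊕ Fin 2 → Fin n := Sum.elim Subtype.val ![e, f] with hu_def
  have huval : ∀ t : Fin 2, u (Sum.inr t) = if t = 0 then e else f := by
    intro t; fin_cases t <;> rfl
  have hu : Function.Injective u := by
    rintro (a | t) (b | s) h
    · exact congrArg Sum.inl (Subtype.ext h)
    · rw [show u (Sum.inl a) = (a : Fin n) from rfl, huval s] at h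
      by_cases hs : s = 0
      · rw [if_pos hs] at h; exact absurd (h ▸ a.2) he
      · rw [if_neg hs] at h; exact absurd (h ▸ a.2) hf
    · rw [show u (Sum.inl b) = (b : Fin n) from rfl, huval t] at h
      by_cases ht : t = 0
      · rw [if_pos ht] at h; exact absurd (h.symm ▸ b.2) he
      · rw [if_neg ht] at h; exact absurd (h.symm ▸ b.2) hf
    · rw [huval t, huval s] at h
      by_cases ht : t = 0 <;> by_cases hs : s = 0
      · rw [ht, hs]
      · rw [if_pos ht, if_neg hs] at h; exact absurd h hef
      · rw [if_neg ht, if_pos hs] at h; exact absurd h.symm hef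
      · rw [Fin.eq_one_of_ne_zero t ht, Fin.eq_one_of_ne_zero s hs]
  set M := N.submatrix u u with hM_def
  have hM : M.PosSemidef := hN.submatrix u
  have h11 : M.toBlocks₁₁ = prinSub N S := by ext i j; rfl
  set W := schurW M with hW_def
  set dA := (1 + prinSub N S).det with hdA_def
  have hdA : 0 < dA := det_one_add_prinSub_pos hN S
  have hef' : e ∉ insert f S := by simp [Finset.mem_insert, hef, he]
  have hfact_ef : (1 + prinSub N (insert e (insert f S))).det = dA * (1 + W).det := by
    rw [det_one_add_prinSub_eq N _ u hu ?him ?hcard, det_one_add_schur hM, h11]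
    case him =>
      rintro (a | t)
      · exact Finset.mem_insert_of_mem (Finset.mem_insert_of_mem a.2)
      · rw [huval t]
        by_cases ht : t = 0
        · rw [if_pos ht]; exact Finset.mem_insert_self _ _
        · rw [if_neg ht]; exact Finset.mem_insert_of_mem (Finset.mem_insert_self _ _)
    case hcard =>
      rw [Fintype.card_sum, Fintype.card_coe, Finset.card_insert_of_notMem hef',
        Finset.card_insert_of_notMem hf, Fintype.card_fin]
  have hone : ∀ (g : Unit → Fin 2) (c : Fin n), u (Sum.inr (g ())) = c → c ∉ S →
      (1 + prinSub N (insert c S)).det = dA * (1 + W (g ()) (g ())) := by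
    intro g c hgc hc
    set u' : {x // x ∈ S} ⊕ Unit → Fin n := u ∘ Sum.map id g with hu'_def
    have hu' : Function.Injective u' :=
      hu.comp (Function.Injective.sumMap (fun a b h => h) (fun a b h => rfl))
    have him' : ∀ z, u' z ∈ insert c S := by
      rintro (a | ⟨⟩)
      · exact Finset.mem_insert_of_mem a.2
      · show u (Sum.inr (g ())) ∈ _
        rw [hgc]
        exact Finset.mem_insert_self _ _
    have hcard' : Fintype.card ({x // x ∈ S} ⊕ Unit) = (insert c S).card := by
      rw [Fintype.card_sum, Fintype.card_coe, Finset.card_insert_of_notMem hc, Fintype.card_unit]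
    have hsub : N.submatrix u' u' = M.submatrix (Sum.map id g) (Sum.map id g) := by
      rw [hM_def, Matrix.submatrix_submatrix]
    have hM' : (M.submatrix (Sum.map id g) (Sum.map id g)).PosSemidef := hsub ▸ hN.submatrix u'
    have h11' : (M.submatrix (Sum.map id g) (Sum.map id g)).toBlocks₁₁ = prinSub N S := by
      ext i j; rfl
    have hdetu : (1 + schurW (M.submatrix (Sum.map id g) (Sum.map id g))).det
        = 1 + W (g ()) (g ()) := by
      rw [schurW_submatrix, Matrix.det_unique]
      simp [Matrix.add_apply, Matrix.one_apply_eq, Matrix.submatrix_apply]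
      rfl
    rw [det_one_add_prinSub_eq N _ u' hu' him' hcard', hsub,
      det_one_add_schur hM', h11', hdetu]
  have hfact_e : (1 + prinSub N (insert e S)).det = dA * (1 + W 0 0) :=
    hone (fun _ => 0) e rfl he
  have hfact_f : (1 + prinSub N (insert f S)).det = dA * (1 + W 1 1) :=
    hone (fun _ => 1) f rfl hf
  have hWh : W 0 1 = W 1 0 := by
    have h := congrFun (congrFun (schurW_herm hM.1).eq 0) 1
    rw [Matrix.conjTranspose_apply] at h
    simpa using h.symm
  have hdet2 : (1 + W).det = (1 + W 0 0) * (1 + W 1 1) - W 1 0 * W 1 0 := by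
    rw [Matrix.det_fin_two]
    rw [Matrix.add_apply, Matrix.add_apply, Matrix.add_apply, Matrix.add_apply,
      Matrix.one_apply_eq, Matrix.one_apply_eq,
      Matrix.one_apply_ne (by decide : (0 : Fin 2) ≠ 1),
      Matrix.one_apply_ne (by decide : (1 : Fin 2) ≠ 0), hWh]
    ring
  rw [hfact_ef, hfact_e, hfact_f, hdet2]
  nlinarith [mul_nonneg (mul_nonneg hdA.le hdA.le) (mul_self_nonneg (W 1 0))]

end DSub


section CovLayer

variable {n : ℕ}

lemma covMax_insert (k : Fin n × Fin n → ℝ) (i e : Fin n) (S : Finset (Fin n))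
    (hke : 0 ≤ k (i, e)) :
    covMax k i (insert e S) = max (k (i, e)) (covMax k i S) := by
  rcases S.eq_empty_or_nonempty with rfl | h
  · simp [covMax, max_eq_left hke]
  · rw [covMax, covMax, dif_pos h, dif_pos (Finset.insert_nonempty e S)]
    rw [Finset.sup'_insert (H := h)]

lemma covMax_le_insert (k : Fin n × Fin n → ℝ) (i e : Fin n) (S : Finset (Fin n))
    (hke : 0 ≤ k (i, e)) :
    covMax k i S ≤ covMax k i (insert e S) := by
  rw [covMax_insert k i e S hke]
  exact le_max_right _ _

lemma max_marg_antitone {a m m' : ℝ} (hm : m ≤ m') :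
    max a m' - m' ≤ max a m - m := by
  rcases le_total a m with h | h
  · rw [max_eq_right h, max_eq_right (h.trans hm)]; simp
  · rcases le_total a m' with h' | h'
    · rw [max_eq_right h', max_eq_left h]; linarith
    · rw [max_eq_left h', max_eq_left h]; linarith

end CovLayer

section SmulPSD

lemma psd_smul' {m : ℕ} {K : Matrix (Fin m) (Fin m) ℝ} (hK : K.PosSemidef) {η : ℝ}
    (hη : 0 ≤ η) : (η • K).PosSemidef := by
  rw [Matrix.posSemidef_iff_dotProduct_mulVec]
  constructor
  · show (η • K)ᴴ = η • K
    rw [Matrix.conjTranspose_smul, star_trivial, hK.1.eq]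
  · intro x
    rw [Matrix.smul_mulVec, dotProduct_smul, smul_eq_mul]
    exact mul_nonneg hη (hK.dotProduct_mulVec_nonneg x)

end SmulPSD

section DlogLayer

variable {n : ℕ}

lemma one_add_smul_prinSub (K : Matrix (Fin n) (Fin n) ℝ) (η : ℝ) (S : Finset (Fin n)) :
    (1 : Matrix _ _ ℝ) + η • prinSub K S = 1 + prinSub (η • K) S := by
  ext i j
  simp [prinSub, Matrix.add_apply, Matrix.smul_apply, Matrix.submatrix_apply]

lemma Dlog_eq_log (K : Matrix (Fin n) (Fin n) ℝ) (η : ℝ) (S : Finset (Fin n)) :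
    Dlog K η S = Real.log (1 + prinSub (η • K) S).det := by
  rw [Dlog, one_add_smul_prinSub]

lemma Dlog_mono_step {K : Matrix (Fin n) (Fin n) ℝ} (hK : K.PosSemidef) {η : ℝ}
    (hη : 0 ≤ η) (e : Fin n) (S : Finset (Fin n)) :
    Dlog K η S ≤ Dlog K η (insert e S) := by
  by_cases he : e ∈ S
  · rw [Finset.insert_eq_self.mpr he]
  · have hN : (η • K).PosSemidef := psd_smul' hK hη
    rw [Dlog_eq_log, Dlog_eq_log]
    exact Real.log_le_log (det_one_add_prinSub_pos hN S) (Dmono_step hN S e he)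

lemma Dlog_sub_step {K : Matrix (Fin n) (Fin n) ℝ} (hK : K.PosSemidef) {η : ℝ}
    (hη : 0 ≤ η) {e f : Fin n} {S : Finset (Fin n)} (he : e ∉ S) (hf : f ∉ S) (hef : e ≠ f) :
    Dlog K η (insert e (insert f S)) - Dlog K η (insert f S) ≤
      Dlog K η (insert e S) - Dlog K η S := by
  have hN : (η • K).PosSemidef := psd_smul' hK hη
  have pa := det_one_add_prinSub_pos hN (insert e (insert f S))
  have pb := det_one_add_prinSub_pos hN (insert e S)
  have pc := det_one_add_prinSub_pos hN (insert f S)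
  have pd := det_one_add_prinSub_pos hN S
  have key := Dsub_step hN S e f he hf hef
  have hlog : Real.log ((1 + prinSub (η • K) (insert e (insert f S))).det *
      (1 + prinSub (η • K) S).det) ≤
      Real.log ((1 + prinSub (η • K) (insert e S)).det *
        (1 + prinSub (η • K) (insert f S)).det) :=
    Real.log_le_log (mul_pos pa pd) key
  rw [Real.log_mul pa.ne' pd.ne', Real.log_mul pb.ne' pc.ne'] at hlog
  rw [Dlog_eq_log, Dlog_eq_log, Dlog_eq_log, Dlog_eq_log]
  linarith

end DlogLayer

section Assembly

variable {n : ℕ} (r : Fin n → ℝ) (k : Fin n × Fin n → ℝ) (K : Matrix (Fin n) (Fin n) ℝ)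
  (η α β γ : ℝ)

lemma RCD_insert_le (hr : ∀ i, 0 ≤ r i) (hk : ∀ i j : Fin n, 0 ≤ k (i, j))
    (hK : K.PosSemidef) (hη : 0 ≤ η) (hα : 0 ≤ α) (hβ : 0 ≤ β) (hγ : 0 ≤ γ)
    (e : Fin n) (S : Finset (Fin n)) :
    RCD r k K η α β γ S ≤ RCD r k K η α β γ (insert e S) := by
  by_cases he : e ∈ S
  · rw [Finset.insert_eq_self.mpr he]
  · rw [RCD, RCD]
    have hR : α * ∑ i ∈ S, r i ≤ α * ∑ i ∈ insert e S, r i := by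
      apply mul_le_mul_of_nonneg_left _ hα
      rw [Finset.sum_insert he]
      linarith [hr e]
    have hC : β * facilityCoverage k S ≤ β * facilityCoverage k (insert e S) := by
      apply mul_le_mul_of_nonneg_left _ hβ
      exact Finset.sum_le_sum fun i _ => covMax_le_insert k i e S (hk i e)
    have hD : γ * Dlog K η S ≤ γ * Dlog K η (insert e S) :=
      mul_le_mul_of_nonneg_left (Dlog_mono_step hK hη e S) hγ
    linarith

lemma RCD_marg_step (hr : ∀ i, 0 ≤ r i) (hk : ∀ i j : Fin n, 0 ≤ k (i, j))
    (hK : K.PosSemidef) (hη : 0 ≤ η) (hα : 0 ≤ α) (hβ : 0 ≤ β) (hγ : 0 ≤ γ)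
    {e f : Fin n} {S : Finset (Fin n)} (he : e ∉ S) (hef : e ≠ f) :
    RCD r k K η α β γ (insert e (insert f S)) - RCD r k K η α β γ (insert f S) ≤
      RCD r k K η α β γ (insert e S) - RCD r k K η α β γ S := by
  by_cases hf : f ∈ S
  · rw [Finset.insert_eq_self.mpr hf]
  · have hefS : e ∉ insert f S := by simp [Finset.mem_insert, hef, he]
    have hR1 : ∑ i ∈ insert e (insert f S), r i = r e + ∑ i ∈ insert f S, r i :=
      Finset.sum_insert hefS
    have hR2 : ∑ i ∈ insert e S, r i = r e + ∑ i ∈ S, r i := Finset.sum_insert he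
    have hC : facilityCoverage k (insert e (insert f S)) - facilityCoverage k (insert f S) ≤
        facilityCoverage k (insert e S) - facilityCoverage k S := by
      rw [facilityCoverage, facilityCoverage, facilityCoverage, facilityCoverage,
        ← Finset.sum_sub_distrib, ← Finset.sum_sub_distrib]
      refine Finset.sum_le_sum fun i _ => ?_
      rw [covMax_insert k i e _ (hk i e), covMax_insert k i e _ (hk i e)]
      exact max_marg_antitone (covMax_le_insert k i f S (hk i f))
    have hD : Dlog K η (insert e (insert f S)) - Dlog K η (insert f S) ≤
        Dlog K η (insert e S) - Dlog K η S := Dlog_sub_step hK hη he hf hef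
    have hC' := mul_le_mul_of_nonneg_left hC hβ
    have hD' := mul_le_mul_of_nonneg_left hD hγ
    rw [RCD, RCD, RCD, RCD, hR1, hR2]
    ring_nf
    ring_nf at hC' hD'
    linarith

end Assembly

theorem RCD_monotone_submodular' {n : ℕ} (hn : 0 < n)
    (r : Fin n → ℝ) (hr : ∀ i, 0 ≤ r i)
    (k : Fin n × Fin n → ℝ) (hk : ∀ i j : Fin n, 0 ≤ k (i, j))
    (K : Matrix (Fin n) (Fin n) ℝ) (hK : K.PosSemidef)
    (η : ℝ) (hη : 0 < η) (α β γ : ℝ) (hα : 0 ≤ α) (hβ : 0 ≤ β) (hγ : 0 ≤ γ) :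
    (∀ A B : Finset (Fin n), A ⊆ B →
      RCD r k K η α β γ A ≤ RCD r k K η α β γ B) ∧
    (∀ A B : Finset (Fin n), A ⊆ B → ∀ e : Fin n, e ∉ B →
      RCD r k K η α β γ (insert e A) - RCD r k K η α β γ A ≥
        RCD r k K η α β γ (insert e B) - RCD r k K η α β γ B) := by
  constructor
  · intro A B hAB
    have key : ∀ C T : Finset (Fin n), RCD r k K η α β γ T ≤ RCD r k K η α β γ (T ∪ C) := by
      intro C
      induction C using Finset.induction_on with
      | empty => intro T; simp
      | @insert a s ha ih =>
        intro T
        rw [Finset.union_insert]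
        exact (ih T).trans (RCD_insert_le r k K η α β γ hr hk hK hη.le hα hβ hγ a (T ∪ s))
    have := key (B \ A) A
    rwa [Finset.union_sdiff_of_subset hAB] at this
  · intro A B hAB e heB
    rw [ge_iff_le]
    have key : ∀ C : Finset (Fin n), e ∉ C → ∀ T : Finset (Fin n), e ∉ T →
        RCD r k K η α β γ (insert e (T ∪ C)) - RCD r k K η α β γ (T ∪ C) ≤
          RCD r k K η α β γ (insert e T) - RCD r k K η α β γ T := by
      intro C
      induction C using Finset.induction_on with
      | empty => intro _ T _; simp
      | @insert a s ha ih =>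
        intro heC T heT
        rw [Finset.mem_insert, not_or] at heC
        rw [Finset.union_insert]
        calc RCD r k K η α β γ (insert e (insert a (T ∪ s))) -
              RCD r k K η α β γ (insert a (T ∪ s)) ≤
            RCD r k K η α β γ (insert e (T ∪ s)) - RCD r k K η α β γ (T ∪ s) := by
              apply RCD_marg_step r k K η α β γ hr hk hK hη.le hα hβ hγ _ heC.1
              simp only [Finset.mem_union, not_or]
              exact ⟨heT, heC.2⟩
          _ ≤ _ := ih heC.2 T heT
    have h1 : e ∉ B \ A := fun h => heB (Finset.mem_sdiff.mp h).1
    have h2 : e ∉ A := fun h => heB (hAB h)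
    have := key (B \ A) h1 A h2
    rwa [Finset.union_sdiff_of_subset hAB] at this

/-- the RCD objective is monotone and submodular. -/
theorem RCD_monotone_submodular {n : ℕ} (hn : 0 < n)
    (r : Fin n → ℝ) (hr : ∀ i, 0 ≤ r i)
    (k : Fin n × Fin n → ℝ) (hk : ∀ i j : Fin n, 0 ≤ k (i, j))
    (K : Matrix (Fin n) (Fin n) ℝ) (hK : K.PosSemidef)
    (η : ℝ) (hη : 0 < η) (α β γ : ℝ) (hα : 0 ≤ α) (hβ : 0 ≤ β) (hγ : 0 ≤ γ) :
    (∀ A B : Finset (Fin n), A ⊆ B →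
      RCD r k K η α β γ A ≤ RCD r k K η α β γ B) ∧
    (∀ A B : Finset (Fin n), A ⊆ B → ∀ e : Fin n, e ∉ B →
      RCD r k K η α β γ (insert e A) - RCD r k K η α β γ A ≥
        RCD r k K η α β γ (insert e B) - RCD r k K η α β γ B) := by
  exact RCD_monotone_submodular' hn r hr k hk K hK η hη α β γ hα hβ hγ
end
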